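/- Let a₁ < a₂ < a₃ be positive integers with gcd(a₁, a₂, a₃) = 1. Then there exists a real θ such that cos(a₁θ) + cos(a₂θ) + cos(a₃θ) ≤ (−17 − 7√7)/27. -/

import Mathlib

open Real Finset

lemma sum_cos_odd_mul (p n : ℕ) (hp : 0 < p) (h : ¬ (p ∣ n)) :
    ∑ k ∈ Finset.range p, Real.cos ((n:ℝ) * (2*k+1) * π / p) = 0 := by
  set z : ℂ := Complex.exp (((2 * π * n / p : ℝ) : ℂ) * Complex.I) with hz
  have hp0 : (p:ℝ) ≠ 0 := Nat.cast_ne_zero.2 hp.ne'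
  have hpc : (p:ℂ) ≠ 0 := Nat.cast_ne_zero.2 hp.ne'
  have hζ : z ≠ 1 := by
    intro hone
    rw [hz, Complex.exp_eq_one_iff] at hone
    obtain ⟨m, hm⟩ := hone
    push_cast at hm
    have hm' : ((2 * π * n / p : ℝ) : ℂ) * Complex.I = ((m * (2*π) : ℝ) : ℂ) * Complex.I := by
      push_cast
      linear_combination hm
    have hre : (2 * π * n / p : ℝ) = m * (2*π) := by
      have := mul_right_cancel₀ Complex.I_ne_zero hm'
      exact_mod_cast this
    have hnp : (n : ℝ) = m * p := by
      field_simp at hre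
      nlinarith [Real.pi_pos, hre]
    have hint : (n : ℤ) = m * p := by exact_mod_cast hnp
    exact h (Int.natCast_dvd_natCast.mp ⟨m, by rw [hint, mul_comm]⟩)
  have hzp : z ^ p = 1 := by
    rw [hz, ← Complex.exp_nat_mul]
    have : (p:ℂ) * (((2 * π * n / p : ℝ) : ℂ) * Complex.I) = (n:ℂ) * (2 * π * Complex.I) := by
      push_cast
      field_simp
    rw [this, Complex.exp_nat_mul_two_pi_mul_I]
  have hgeom : ∑ k ∈ Finset.range p, z ^ k = 0 := by
    rw [geom_sum_eq hζ, hzp]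
    simp
  have hterm : ∀ k : ℕ, Real.cos ((n:ℝ) * (2*k+1) * π / p)
      = (Complex.exp (((n * π / p : ℝ):ℂ) * Complex.I) * z ^ k).re := by
    intro k
    rw [hz, ← Complex.exp_nat_mul, ← Complex.exp_add]
    have : ((n * π / p : ℝ):ℂ) * Complex.I + (k:ℂ) * (((2 * π * n / p : ℝ) : ℂ) * Complex.I)
        = (((n:ℝ) * (2*k+1) * π / p : ℝ) : ℂ) * Complex.I := by
      push_cast
      field_simp
      ring
    rw [this, Complex.exp_ofReal_mul_I_re]
  calc ∑ k ∈ Finset.range p, Real.cos ((n:ℝ) * (2*k+1) * π / p)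
      = (∑ k ∈ Finset.range p, Complex.exp (((n * π / p : ℝ):ℂ) * Complex.I) * z ^ k).re := by
        rw [Complex.re_sum]
        exact Finset.sum_congr rfl (fun k _ => hterm k)
    _ = 0 := by
        rw [← Finset.mul_sum, hgeom, mul_zero, Complex.zero_re]

lemma cos_odd_mul_pi (k : ℕ) : Real.cos ((2*(k:ℝ)+1)*π) = -1 := by
  have : (2*(k:ℝ)+1)*π = π + (k:ℝ)*(2*π) := by ring
  rw [this]
  rw [show ((k:ℝ)*(2*π)) = ((k:ℤ):ℝ)*(2*π) by push_cast; ring]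
  rw [Real.cos_add_int_mul_two_pi, Real.cos_pi]

lemma var_lemma (p u v : ℕ) (hp : 0 < p) (huv : u < v)
    (h1 : ¬ p ∣ u) (h2 : ¬ p ∣ v) (h3 : ¬ p ∣ (2*u)) (h4 : ¬ p ∣ (2*v))
    (h5 : ¬ p ∣ (u+v)) (h6 : ¬ p ∣ (v-u)) :
    ∃ θ : ℝ, Real.cos (u*θ) + Real.cos (v*θ) + Real.cos (p*θ) ≤ -(3/2) := by
  set θ : ℕ → ℝ := fun k => (2*(k:ℝ)+1)*π/p with hθ
  set x : ℕ → ℝ := fun k => Real.cos (u * θ k) + Real.cos (v * θ k) with hx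
  have hang : ∀ (n : ℕ) (k : ℕ), (n:ℝ) * θ k = (n:ℝ) * (2*k+1) * π / p := by
    intro n k; simp only [hθ]; ring
  have hsum : ∑ k ∈ Finset.range p, x k = 0 := by
    simp only [hx]
    rw [Finset.sum_add_distrib]
    have e1 : ∀ k ∈ Finset.range p, Real.cos (u * θ k) = Real.cos ((u:ℝ) * (2*k+1) * π / p) := by
      intro k _; rw [hang]
    have e2 : ∀ k ∈ Finset.range p, Real.cos (v * θ k) = Real.cos ((v:ℝ) * (2*k+1) * π / p) := by
      intro k _; rw [hang]
    rw [Finset.sum_congr rfl e1, Finset.sum_congr rfl e2,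
      sum_cos_odd_mul p u hp h1, sum_cos_odd_mul p v hp h2, add_zero]
  have hsq : ∑ k ∈ Finset.range p, (x k)^2 = p := by
    have hpt : ∀ k ∈ Finset.range p, (x k)^2 =
        1 + Real.cos (2*(u:ℝ) * θ k)/2 + Real.cos (2*(v:ℝ) * θ k)/2
          + Real.cos (((u:ℝ)+(v:ℝ)) * θ k) + Real.cos (((v:ℝ)-(u:ℝ)) * θ k) := by
      intro k _
      have hA := Real.cos_sq (u * θ k)
      have hB := Real.cos_sq (v * θ k)
      have hadd := Real.cos_add ((u:ℝ) * θ k) ((v:ℝ) * θ k)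
      have hsub := Real.cos_sub ((v:ℝ) * θ k) ((u:ℝ) * θ k)
      have c2u : Real.cos (2*(u:ℝ) * θ k) = Real.cos (2 * ((u:ℝ) * θ k)) := by
        ring_nf
      have c2v : Real.cos (2*(v:ℝ) * θ k) = Real.cos (2 * ((v:ℝ) * θ k)) := by
        ring_nf
      have cuv : Real.cos (((u:ℝ)+(v:ℝ)) * θ k) = Real.cos ((u:ℝ) * θ k + (v:ℝ) * θ k) := by
        ring_nf
      have cvu : Real.cos (((v:ℝ)-(u:ℝ)) * θ k) = Real.cos ((v:ℝ) * θ k - (u:ℝ) * θ k) := by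
        ring_nf
      rw [c2u, c2v, cuv, cvu]
      simp only [hx]
      nlinarith [hA, hB, hadd, hsub]
    rw [Finset.sum_congr rfl hpt]
    have z1 : ∑ k ∈ Finset.range p, Real.cos (2*(u:ℝ) * θ k) = 0 := by
      rw [Finset.sum_congr rfl (fun k _ => by
        rw [show (2*(u:ℝ)) * θ k = ((2*u:ℕ):ℝ) * θ k by push_cast; ring, hang (2*u) k])]
      exact sum_cos_odd_mul p (2*u) hp h3
    have z2 : ∑ k ∈ Finset.range p, Real.cos (2*(v:ℝ) * θ k) = 0 := by
      rw [Finset.sum_congr rfl (fun k _ => by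
        rw [show (2*(v:ℝ)) * θ k = ((2*v:ℕ):ℝ) * θ k by push_cast; ring, hang (2*v) k])]
      exact sum_cos_odd_mul p (2*v) hp h4
    have z3 : ∑ k ∈ Finset.range p, Real.cos (((u:ℝ)+(v:ℝ)) * θ k) = 0 := by
      rw [Finset.sum_congr rfl (fun k _ => by
        rw [show ((u:ℝ)+(v:ℝ)) * θ k = ((u+v:ℕ):ℝ) * θ k by push_cast; ring, hang (u+v) k])]
      exact sum_cos_odd_mul p (u+v) hp h5
    have z4 : ∑ k ∈ Finset.range p, Real.cos (((v:ℝ)-(u:ℝ)) * θ k) = 0 := by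
      rw [Finset.sum_congr rfl (fun k _ => by
        rw [show ((v:ℝ)-(u:ℝ)) * θ k = ((v-u:ℕ):ℝ) * θ k by
          rw [Nat.cast_sub huv.le], hang (v-u) k])]
      exact sum_cos_odd_mul p (v-u) hp h6
    simp only [Finset.sum_add_distrib, z3, z4, Finset.sum_const,
      Finset.card_range, nsmul_eq_mul, mul_one]
    rw [← Finset.sum_div, ← Finset.sum_div, z1, z2]
    norm_num
  -- cos(p θ k) = -1
  have hcp : ∀ k : ℕ, Real.cos (p * θ k) = -1 := by
    intro k
    have : (p:ℝ) * θ k = (2*(k:ℝ)+1)*π := by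
      simp only [hθ]
      field_simp
    rw [this, cos_odd_mul_pi]
  by_contra hcon
  push_neg at hcon
  have hxgt : ∀ k ∈ Finset.range p, -(1/2 : ℝ) < x k := by
    intro k _
    have := hcon (θ k)
    have h2 := hcp k
    simp only [hx]
    linarith
  have hx2 : ∀ k ∈ Finset.range p, x k ≤ 2 := by
    intro k _
    simp only [hx]
    have := Real.cos_le_one ((u:ℝ) * θ k)
    have := Real.cos_le_one ((v:ℝ) * θ k)
    linarith
  have hT : ∑ k ∈ Finset.range p, (2 - x k)*(x k + 1/2) = 0 := by
    have : ∀ k ∈ Finset.range p, (2 - x k)*(x k + 1/2) = (3/2) * x k + 1 - (x k)^2 := by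
      intro k _; ring
    rw [Finset.sum_congr rfl this]
    simp only [Finset.sum_add_distrib, Finset.sum_sub_distrib, ← Finset.mul_sum, hsum, hsq,
      Finset.sum_const, Finset.card_range, nsmul_eq_mul, mul_one, mul_zero]
    ring
  have hterm0 : ∀ k ∈ Finset.range p, (2 - x k)*(x k + 1/2) = 0 := by
    refine (Finset.sum_eq_zero_iff_of_nonneg ?_).mp hT
    intro k hk
    have ha := hxgt k hk
    have hb := hx2 k hk
    have := mul_nonneg (by linarith : (0:ℝ) ≤ 2 - x k) (by linarith : (0:ℝ) ≤ x k + 1/2)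
    linarith
  have hkx : ∀ k ∈ Finset.range p, x k = 2 := by
    intro k hk
    have h0 := hterm0 k hk
    have h1 := hxgt k hk
    rcases mul_eq_zero.mp h0 with h | h
    · linarith
    · linarith
  have : ∑ k ∈ Finset.range p, x k = 2 * p := by
    rw [Finset.sum_congr rfl hkx]
    simp [mul_comm]
  rw [hsum] at this
  have hppos : (0:ℝ) < p := by exact_mod_cast hp
  linarith

lemma near_lemma (n : ℕ) (hn : 1 ≤ n) (x : ℝ) :
    ∃ j : ℤ, Real.cos (x + 2*π*j/n) ≤ -Real.cos (π/n) := by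
  have hnp : (0:ℝ) < n := by exact_mod_cast hn
  have hpi := Real.pi_pos
  set t : ℝ := (π - x)*n/(2*π) with ht
  refine ⟨round t, ?_⟩
  set δ : ℝ := x + 2*π*(round t)/n - π with hδ
  have hδe : δ = (2*π/n) * ((round t : ℝ) - t) := by
    rw [hδ, ht]; field_simp; ring
  have habs : |δ| ≤ π/n := by
    rw [hδe, abs_mul]
    have h1 : |(2*π/n)| = 2*π/n := abs_of_pos (by positivity)
    have h2 : |(round t : ℝ) - t| ≤ 1/2 := by
      rw [abs_sub_comm]; exact abs_sub_round t
    rw [h1]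
    calc 2*π/n * |(round t : ℝ) - t| ≤ 2*π/n * (1/2) := by
          apply mul_le_mul_of_nonneg_left h2 (by positivity)
      _ = π/n := by ring
  have hxe : x + 2*π*(round t)/n = π + δ := by rw [hδ]; ring
  rw [hxe]
  have hca : Real.cos (π + δ) = -Real.cos δ := by
    rw [Real.cos_add]; simp
  rw [hca]
  have : Real.cos (π/n) ≤ Real.cos δ := by
    rw [← Real.cos_abs δ]
    apply Real.cos_le_cos_of_nonneg_of_le_pi (abs_nonneg δ) _ habs
    exact div_le_self hpi.le (by exact_mod_cast hn)
  linarith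

lemma bez_lemma (a b : ℕ) (h : Nat.Coprime a b) (j : ℤ) :
    ∃ r s : ℤ, r * a = j + s * b := by
  have hic : IsCoprime (a:ℤ) (b:ℤ) := Int.isCoprime_iff_gcd_eq_one.mpr (by
    simpa [Int.gcd] using h)
  obtain ⟨u, v, huv⟩ := hic
  exact ⟨j*u, -(j*v), by linear_combination j * huv⟩

-- GRID-B : c = 2b case
lemma gridB (a b : ℕ) (ha : 0 < a) (hco : Nat.Coprime a b) (hb3 : 3 ≤ b) :
    ∃ θ : ℝ, Real.cos (a*θ) + Real.cos (b*θ) + Real.cos (2*(b:ℝ)*θ) ≤ -(13/8) := by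
  have hpi := Real.pi_pos
  have hb0 : (0:ℝ) < b := by positivity
  set t₁ : ℝ := Real.arccos (-(1/4)) with ht₁
  have hcos1 : Real.cos t₁ = -(1/4) := Real.cos_arccos (by norm_num) (by norm_num)
  obtain ⟨j, hj⟩ := near_lemma b (by omega) ((a:ℝ)*t₁/b)
  obtain ⟨r, s, hrs⟩ := bez_lemma a b hco j
  refine ⟨(t₁ + 2*π*r)/b, ?_⟩
  have hbθ : (b:ℝ) * ((t₁ + 2*π*r)/b) = t₁ + (r:ℝ)*(2*π) := by
    field_simp
  have haθ : (a:ℝ) * ((t₁ + 2*π*r)/b) = ((a:ℝ)*t₁/b + 2*π*j/b) + (s:ℝ)*(2*π) := by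
    have : (r:ℝ) * a = (j:ℝ) + (s:ℝ)*b := by exact_mod_cast hrs
    field_simp
    nlinarith [this]
  have hcθ : 2*(b:ℝ) * ((t₁ + 2*π*r)/b) = 2*t₁ + ((2*r :ℤ):ℝ)*(2*π) := by
    push_cast; field_simp
  have e1 : Real.cos ((b:ℝ) * ((t₁ + 2*π*r)/b)) = -(1/4) := by
    rw [hbθ, Real.cos_add_int_mul_two_pi, hcos1]
  have e2 : Real.cos (2*(b:ℝ) * ((t₁ + 2*π*r)/b)) = -(7/8) := by
    rw [hcθ, Real.cos_add_int_mul_two_pi, Real.cos_two_mul, hcos1]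
    norm_num
  have e3 : Real.cos ((a:ℝ) * ((t₁ + 2*π*r)/b)) ≤ -(1/2) := by
    rw [haθ, Real.cos_add_int_mul_two_pi]
    have hmono : Real.cos (π/3) ≤ Real.cos (π/b) := by
      apply Real.cos_le_cos_of_nonneg_of_le_pi (by positivity) (by linarith)
      exact div_le_div_of_nonneg_left hpi.le (by norm_num) (by exact_mod_cast hb3)
    rw [Real.cos_pi_div_three] at hmono
    linarith [hj]
  linarith [e1, e2, e3]

-- GRID-A : c = a + b case, b ≥ 5
lemma gridA (a b : ℕ) (ha : 0 < a) (hco : Nat.Coprime a b) (hb5 : 5 ≤ b) :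
    ∃ θ : ℝ, Real.cos (a*θ) + Real.cos (b*θ) + Real.cos (((a:ℝ)+(b:ℝ))*θ)
      ≤ -1 - Real.cos (π/b)^2/2 := by
  have hpi := Real.pi_pos
  have hb0 : (0:ℝ) < b := by positivity
  set κ : ℝ := Real.cos (π/b) with hκ
  have hκ1 : κ ≤ 1 := Real.cos_le_one _
  have hκ0 : 0 ≤ κ := by
    apply Real.cos_nonneg_of_mem_Icc
    constructor
    · have : (0:ℝ) < π/b := by positivity
      linarith
    · apply div_le_div_of_nonneg_left hpi.le (by norm_num)
      exact_mod_cast (by omega : 2 ≤ b)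
  set y : ℝ := 2 * Real.arccos (κ/2) with hy
  have hy2 : Real.cos (y/2) = κ/2 := by
    rw [hy]
    rw [show (2 * Real.arccos (κ/2))/2 = Real.arccos (κ/2) by ring]
    exact Real.cos_arccos (by linarith) (by linarith)
  have hcy : Real.cos y = κ^2/2 - 1 := by
    rw [show y = 2*(y/2) by ring, Real.cos_two_mul, hy2]
    ring
  obtain ⟨j, hj⟩ := near_lemma b (by omega) ((a:ℝ)*y/b + y/2)
  obtain ⟨r, s, hrs⟩ := bez_lemma a b hco j
  refine ⟨(y + 2*π*r)/b, ?_⟩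
  set θ : ℝ := (y + 2*π*r)/b with hθ
  have hbθ : (b:ℝ) * θ = y + (r:ℝ)*(2*π) := by
    rw [hθ]; field_simp
  have haθ : (a:ℝ) * θ = ((a:ℝ)*y/b + 2*π*j/b) + (s:ℝ)*(2*π) := by
    have hc : (r:ℝ) * a = (j:ℝ) + (s:ℝ)*b := by exact_mod_cast hrs
    rw [hθ]; field_simp; nlinarith [hc]
  have e1 : Real.cos ((b:ℝ)*θ) = κ^2/2 - 1 := by
    rw [hbθ, Real.cos_add_int_mul_two_pi, hcy]
  have e2 : Real.cos ((a:ℝ)*θ + y/2) ≤ -κ := by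
    rw [haθ, show ((a:ℝ)*y/b + 2*π*j/b) + (s:ℝ)*(2*π) + y/2
        = ((a:ℝ)*y/b + y/2 + 2*π*j/b) + (s:ℝ)*(2*π) by ring,
      Real.cos_add_int_mul_two_pi]
    exact hj
  have e3 : Real.cos ((a:ℝ)*θ) + Real.cos (((a:ℝ)+(b:ℝ))*θ) ≤ -κ^2 := by
    have hsplit : ((a:ℝ)+(b:ℝ))*θ = (a:ℝ)*θ + y + (r:ℝ)*(2*π) := by
      rw [add_mul, hbθ]; ring
    have : Real.cos (((a:ℝ)+(b:ℝ))*θ) = Real.cos ((a:ℝ)*θ + y) := by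
      rw [hsplit, show (a:ℝ)*θ + y + (r:ℝ)*(2*π) = ((a:ℝ)*θ + y) + (r:ℝ)*(2*π) by ring,
        Real.cos_add_int_mul_two_pi]
    rw [this]
    have hsum := Real.cos_add_cos ((a:ℝ)*θ) ((a:ℝ)*θ + y)
    rw [show (((a:ℝ)*θ + ((a:ℝ)*θ + y))/2) = (a:ℝ)*θ + y/2 by ring,
      show (((a:ℝ)*θ - ((a:ℝ)*θ + y))/2) = -(y/2) by ring, Real.cos_neg, hy2] at hsum
    rw [hsum]
    calc 2 * Real.cos ((a:ℝ)*θ + y/2) * (κ/2) ≤ 2 * (-κ) * (κ/2) := by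
          apply mul_le_mul_of_nonneg_right _ (by linarith)
          apply mul_le_mul_of_nonneg_left e2 (by norm_num)
      _ = -κ^2 := by ring
  linarith [e1, e3]

lemma cheb (u : ℝ) (h1 : -1 ≤ u) (h2 : u ≤ 1) :
    ∃ θ : ℝ, Real.cos θ = u ∧ Real.cos (2*θ) = 2*u^2-1 ∧ Real.cos (3*θ) = 4*u^3-3*u ∧
      Real.cos (4*θ) = 8*u^4-8*u^2+1 ∧ Real.cos (5*θ) = 16*u^5-20*u^3+5*u ∧
      Real.cos (6*θ) = 32*u^6-48*u^4+18*u^2-1 ∧ Real.cos (7*θ) = 64*u^7-112*u^5+56*u^3-7*u := by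
  refine ⟨Real.arccos u, ?_⟩
  have hc : Real.cos (Real.arccos u) = u := Real.cos_arccos h1 h2
  set θ := Real.arccos u with hθ
  have e2 : Real.cos (2*θ) = 2*u^2-1 := by rw [Real.cos_two_mul, hc]
  have e3 : Real.cos (3*θ) = 4*u^3-3*u := by rw [Real.cos_three_mul, hc]
  have e4 : Real.cos (4*θ) = 8*u^4-8*u^2+1 := by
    rw [show (4:ℝ)*θ = 2*(2*θ) by ring, Real.cos_two_mul, e2]; ring
  have e6 : Real.cos (6*θ) = 32*u^6-48*u^4+18*u^2-1 := by
    rw [show (6:ℝ)*θ = 2*(3*θ) by ring, Real.cos_two_mul, e3]; ring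
  have e5 : Real.cos (5*θ) = 16*u^5-20*u^3+5*u := by
    have hsub := Real.cos_sub (3*θ) (2*θ)
    rw [show (3*θ - 2*θ) = θ by ring, hc, e2, e3] at hsub
    have hss : Real.sin (3*θ) * Real.sin (2*θ) = u - (4*u^3-3*u)*(2*u^2-1) := by linarith
    rw [show (5:ℝ)*θ = 3*θ+2*θ by ring, Real.cos_add, e2, e3, hss]; ring
  have e7 : Real.cos (7*θ) = 64*u^7-112*u^5+56*u^3-7*u := by
    have hsub := Real.cos_sub (4*θ) (3*θ)
    rw [show (4*θ - 3*θ) = θ by ring, hc, e3, e4] at hsub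
    have hss : Real.sin (4*θ) * Real.sin (3*θ) = u - (8*u^4-8*u^2+1)*(4*u^3-3*u) := by linarith
    rw [show (7:ℝ)*θ = 4*θ+3*θ by ring, Real.cos_add, e3, e4, hss]; ring
  exact ⟨hc, e2, e3, e4, e5, e6, e7⟩

lemma sqrt7_facts : Real.sqrt 7 ^ 2 = 7 ∧ 2.645 ≤ Real.sqrt 7 ∧ Real.sqrt 7 ≤ 2.6458 := by
  have h7 : Real.sqrt 7 ^ 2 = 7 := Real.sq_sqrt (by norm_num)
  have hn := Real.sqrt_nonneg 7
  refine ⟨h7, by nlinarith, by nlinarith⟩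

-- small-case witnesses, conclusion matches casts of nat literals
lemma w123 : ∃ θ:ℝ, Real.cos (((1:ℕ):ℝ)*θ) + Real.cos (((2:ℕ):ℝ)*θ) + Real.cos (((3:ℕ):ℝ)*θ)
    ≤ (-17 - 7*Real.sqrt 7)/27 := by
  obtain ⟨h7, h7l, h7u⟩ := sqrt7_facts
  have hn := Real.sqrt_nonneg 7
  set u : ℝ := (Real.sqrt 7 - 1)/6 with hu
  obtain ⟨θ, hc, c2, c3, _, _, _, _⟩ := cheb u (by rw [hu]; nlinarith) (by rw [hu]; nlinarith)
  refine ⟨θ, ?_⟩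
  push_cast
  rw [one_mul, hc, c2, c3]
  have : u + (2*u^2-1) + (4*u^3-3*u) = (-17 - 7*Real.sqrt 7)/27 := by
    rw [hu]
    linear_combination (Real.sqrt 7 / 54 + 0) * h7
  linarith [this]

lemma w124 : ∃ θ:ℝ, Real.cos (((1:ℕ):ℝ)*θ) + Real.cos (((2:ℕ):ℝ)*θ) + Real.cos (((4:ℕ):ℝ)*θ)
    ≤ (-17 - 7*Real.sqrt 7)/27 := by
  obtain ⟨h7, h7l, h7u⟩ := sqrt7_facts
  obtain ⟨θ, hc, c2, _, c4, _, _, _⟩ := cheb (-(3/5)) (by norm_num) (by norm_num)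
  refine ⟨θ, ?_⟩
  push_cast
  rw [one_mul, hc, c2, c4]
  norm_num
  linarith

lemma w234 : ∃ θ:ℝ, Real.cos (((2:ℕ):ℝ)*θ) + Real.cos (((3:ℕ):ℝ)*θ) + Real.cos (((4:ℕ):ℝ)*θ)
    ≤ (-17 - 7*Real.sqrt 7)/27 := by
  obtain ⟨h7, h7l, h7u⟩ := sqrt7_facts
  obtain ⟨θ, hc, c2, c3, c4, _, _, _⟩ := cheb (3/5) (by norm_num) (by norm_num)
  refine ⟨θ, ?_⟩
  push_cast
  rw [c2, c3, c4]
  norm_num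
  linarith

lemma w346 : ∃ θ:ℝ, Real.cos (((3:ℕ):ℝ)*θ) + Real.cos (((4:ℕ):ℝ)*θ) + Real.cos (((6:ℕ):ℝ)*θ)
    ≤ (-17 - 7*Real.sqrt 7)/27 := by
  obtain ⟨h7, h7l, h7u⟩ := sqrt7_facts
  obtain ⟨θ, hc, c2, c3, c4, _, c6, _⟩ := cheb (71/100) (by norm_num) (by norm_num)
  refine ⟨θ, ?_⟩
  push_cast
  rw [c3, c4, c6]
  norm_num
  linarith

lemma w235 : ∃ θ:ℝ, Real.cos (((2:ℕ):ℝ)*θ) + Real.cos (((3:ℕ):ℝ)*θ) + Real.cos (((5:ℕ):ℝ)*θ)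
    ≤ (-17 - 7*Real.sqrt 7)/27 := by
  obtain ⟨h7, h7l, h7u⟩ := sqrt7_facts
  obtain ⟨θ, hc, c2, c3, _, c5, _, _⟩ := cheb (7/10) (by norm_num) (by norm_num)
  refine ⟨θ, ?_⟩
  push_cast
  rw [c2, c3, c5]
  norm_num
  linarith

lemma w134 : ∃ θ:ℝ, Real.cos (((1:ℕ):ℝ)*θ) + Real.cos (((3:ℕ):ℝ)*θ) + Real.cos (((4:ℕ):ℝ)*θ)
    ≤ (-17 - 7*Real.sqrt 7)/27 := by
  obtain ⟨h7, h7l, h7u⟩ := sqrt7_facts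
  obtain ⟨θ, hc, _, c3, c4, _, _, _⟩ := cheb (-(43/50)) (by norm_num) (by norm_num)
  refine ⟨θ, ?_⟩
  push_cast
  rw [one_mul, hc, c3, c4]
  norm_num
  linarith

lemma w347 : ∃ θ:ℝ, Real.cos (((3:ℕ):ℝ)*θ) + Real.cos (((4:ℕ):ℝ)*θ) + Real.cos (((7:ℕ):ℝ)*θ)
    ≤ (-17 - 7*Real.sqrt 7)/27 := by
  obtain ⟨h7, h7l, h7u⟩ := sqrt7_facts
  obtain ⟨θ, hc, _, c3, c4, _, _, c7⟩ := cheb (69/200) (by norm_num) (by norm_num)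
  refine ⟨θ, ?_⟩
  push_cast
  rw [c3, c4, c7]
  norm_num
  linarith

lemma w145 : ∃ θ:ℝ, Real.cos (((1:ℕ):ℝ)*θ) + Real.cos (((4:ℕ):ℝ)*θ) + Real.cos (((5:ℕ):ℝ)*θ)
    ≤ (-17 - 7*Real.sqrt 7)/27 := by
  obtain ⟨h7, h7l, h7u⟩ := sqrt7_facts
  obtain ⟨θ, hc, _, _, c4, c5, _, _⟩ := cheb (-(1/2)) (by norm_num) (by norm_num)
  refine ⟨θ, ?_⟩
  push_cast
  rw [one_mul, hc, c4, c5]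
  norm_num
  linarith

lemma not_dvd_sandwich (m n j : ℕ) (hlo : j*m < n) (hhi : n < j*m + 2*m)
    (hne : n ≠ j*m + m) : ¬ m ∣ n := by
  rintro ⟨k, rfl⟩
  have h1 : j < k := by
    rcases Nat.lt_or_ge j k with h|h
    · exact h
    · exfalso
      have h2 : m*k ≤ m*j := Nat.mul_le_mul_left m h
      have h3 : m*j < m*k := by rw [Nat.mul_comm j m] at hlo; exact hlo
      exact Nat.lt_irrefl _ (Nat.lt_of_lt_of_le h3 h2)
  have h2 : k < j + 2 := by
    have h4 : m*k < m*(j+2) := by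
      calc m*k < j*m + 2*m := hhi
        _ = m*(j+2) := by ring
    exact Nat.lt_of_mul_lt_mul_left h4
  have hk : k = j+1 := by omega
  apply hne
  rw [hk]; ring

lemma m_bounds : -(3/2 : ℝ) ≤ (-17 - 7*Real.sqrt 7)/27 ∧ -(13/8 : ℝ) ≤ (-17 - 7*Real.sqrt 7)/27 := by
  have h7 : Real.sqrt 7 ^ 2 = 7 := Real.sq_sqrt (by norm_num)
  have hn := Real.sqrt_nonneg 7
  have h7u : Real.sqrt 7 ≤ 2.6458 := by nlinarith
  constructor <;> nlinarith

theorem exists_cos_sum_three_le (a₁ a₂ a₃ : ℕ) (h₁ : 0 < a₁)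
    (h₁₂ : a₁ < a₂) (h₂₃ : a₂ < a₃) (hgcd : Nat.gcd a₁ (Nat.gcd a₂ a₃) = 1) :
    ∃ θ : ℝ, Real.cos (a₁ * θ) + Real.cos (a₂ * θ) + Real.cos (a₃ * θ) ≤
      (-17 - 7 * Real.sqrt 7) / 27 := by
  obtain ⟨hm32, hm138⟩ := m_bounds
  by_cases hc1 : a₃ = a₁ + a₂
  · -- case c = a + b
    have hco : Nat.Coprime a₁ a₂ := by
      have hd : Nat.gcd a₁ a₂ ∣ Nat.gcd a₁ (Nat.gcd a₂ a₃) :=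
        Nat.dvd_gcd (Nat.gcd_dvd_left _ _)
          (Nat.dvd_gcd (Nat.gcd_dvd_right _ _)
            (by rw [hc1]; exact Dvd.dvd.add (Nat.gcd_dvd_left a₁ a₂) (Nat.gcd_dvd_right a₁ a₂)))
      rw [hgcd] at hd
      exact Nat.dvd_one.mp hd
    by_cases hb2 : a₂ = 2*a₁
    · -- (1,2,3)
      have ha1 : a₁ = 1 := by
        have hgeq : Nat.gcd a₂ a₃ = a₁ := by
          rw [hb2, hc1, hb2, show a₁ + 2*a₁ = a₁*3 by ring, show 2*a₁ = a₁*2 by ring,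
            Nat.gcd_mul_left]
          norm_num
        rw [hgeq, Nat.gcd_self] at hgcd
        exact hgcd
      have ha2 : a₂ = 2 := by omega
      have ha3 : a₃ = 3 := by omega
      rw [ha1, ha2, ha3]
      exact w123
    · by_cases hb5 : 5 ≤ a₂
      · obtain ⟨θ, hθ⟩ := gridA a₁ a₂ h₁ hco hb5
        refine ⟨θ, ?_⟩
        have hb0 : (0:ℝ) < a₂ := by positivity
        have hpi := Real.pi_pos
        have hmono : Real.cos (π/5) ≤ Real.cos (π/(a₂:ℝ)) := by
          apply Real.cos_le_cos_of_nonneg_of_le_pi (by positivity) (by linarith)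
          apply div_le_div_of_nonneg_left hpi.le (by norm_num)
          exact_mod_cast hb5
        rw [Real.cos_pi_div_five] at hmono
        have h5 : Real.sqrt 5 ^ 2 = 5 := Real.sq_sqrt (by norm_num)
        have h5n := Real.sqrt_nonneg 5
        have h5l : 2.236 ≤ Real.sqrt 5 := by nlinarith
        have h7 : Real.sqrt 7 ^ 2 = 7 := Real.sq_sqrt (by norm_num)
        have h7n := Real.sqrt_nonneg 7
        have h7u : Real.sqrt 7 ≤ 2.6458 := by nlinarith
        have hκ0 : (0:ℝ) ≤ (1 + Real.sqrt 5)/4 := by linarith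
        have hκsq : ((1 + Real.sqrt 5)/4)^2 ≤ Real.cos (π/(a₂:ℝ))^2 := by
          apply pow_le_pow_left₀ hκ0 hmono
        have hfin : -1 - Real.cos (π/(a₂:ℝ))^2/2 ≤ (-17 - 7*Real.sqrt 7)/27 := by
          nlinarith
        have hcast : Real.cos ((a₁:ℝ)*θ) + Real.cos ((a₂:ℝ)*θ)
            + Real.cos (((a₁:ℝ)+(a₂:ℝ))*θ) ≤ -1 - Real.cos (π/(a₂:ℝ))^2/2 := hθ
        rw [hc1]
        push_cast
        push_cast at hcast
        linarith
      · -- b ≤ 4 small cases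
        have hb4 : a₂ ≤ 4 := by omega
        have hb2' : 2 ≤ a₂ := by omega
        interval_cases a₂
        · -- a₂ = 2 : a₁ = 1 → a₂ = 2a₁ contradiction
          omega
        · -- a₂ = 3
          interval_cases a₁
          · rw [hc1]; exact w134
          · rw [hc1]; exact w235
        · -- a₂ = 4
          interval_cases a₁
          · rw [hc1]; exact w145
          · exact absurd hco (by norm_num [Nat.Coprime])
          · rw [hc1]; exact w347
  · by_cases hc2 : a₃ = 2*a₂
    · -- c = 2b
      have hco : Nat.Coprime a₁ a₂ := by
        have hd : Nat.gcd a₁ a₂ ∣ Nat.gcd a₁ (Nat.gcd a₂ a₃) :=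
          Nat.dvd_gcd (Nat.gcd_dvd_left _ _)
            (Nat.dvd_gcd (Nat.gcd_dvd_right _ _)
              (by rw [hc2]; exact Dvd.dvd.mul_left (Nat.gcd_dvd_right a₁ a₂) 2))
        rw [hgcd] at hd
        exact Nat.dvd_one.mp hd
      by_cases hb3 : 3 ≤ a₂
      · obtain ⟨θ, hθ⟩ := gridB a₁ a₂ h₁ hco hb3
        refine ⟨θ, ?_⟩
        rw [hc2]
        push_cast
        push_cast at hθ
        linarith
      · -- a₂ = 2, a₁ = 1, a₃ = 4
        have : a₂ = 2 := by omega
        have ha1 : a₁ = 1 := by omega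
        have ha3 : a₃ = 4 := by omega
        rw [ha1, this, ha3]
        exact w124
    · by_cases hc3 : a₃ = 2*a₁
      · -- c = 2a
        by_cases h43 : 4*a₁ = 3*a₂
        · -- (3,4,6)
          have hco : Nat.Coprime a₁ a₂ := by
            have hd : Nat.gcd a₁ a₂ ∣ Nat.gcd a₁ (Nat.gcd a₂ a₃) :=
              Nat.dvd_gcd (Nat.gcd_dvd_left _ _)
                (Nat.dvd_gcd (Nat.gcd_dvd_right _ _)
                  (by rw [hc3]; exact Dvd.dvd.mul_left (Nat.gcd_dvd_left a₁ a₂) 2))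
            rw [hgcd] at hd
            exact Nat.dvd_one.mp hd
          have hb4 : a₂ ∣ 4 := by
            have : a₂ ∣ 4 * a₁ := ⟨3, by omega⟩
            exact (Nat.Coprime.dvd_of_dvd_mul_right (Nat.Coprime.symm hco)) this
          have hble : a₂ ≤ 4 := Nat.le_of_dvd (by norm_num) hb4
          have ha2 : a₂ = 4 := by
            interval_cases a₂ <;> omega
          have ha1 : a₁ = 3 := by omega
          have ha3 : a₃ = 6 := by omega
          rw [ha1, ha2, ha3]
          exact w346
        · by_cases h32 : 3*a₁ = 2*a₂
          · -- (2,3,4)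
            have ha1 : a₁ = 2 := by
              -- 3a₁ = 2a₂, a₁ < a₂ < 2a₁ ; gcd = 1
              have hco : Nat.Coprime a₁ a₂ := by
                have hd : Nat.gcd a₁ a₂ ∣ Nat.gcd a₁ (Nat.gcd a₂ a₃) :=
                  Nat.dvd_gcd (Nat.gcd_dvd_left _ _)
                    (Nat.dvd_gcd (Nat.gcd_dvd_right _ _)
                      (by rw [hc3]; exact Dvd.dvd.mul_left (Nat.gcd_dvd_left a₁ a₂) 2))
                rw [hgcd] at hd
                exact Nat.dvd_one.mp hd
              have hb3 : a₂ ∣ 3 := by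
                have : a₂ ∣ 3 * a₁ := ⟨2, by omega⟩
                exact (Nat.Coprime.dvd_of_dvd_mul_right (Nat.Coprime.symm hco)) this
              have hble : a₂ ≤ 3 := Nat.le_of_dvd (by norm_num) hb3
              interval_cases a₂ <;> omega
            have ha2 : a₂ = 3 := by omega
            have ha3 : a₃ = 4 := by omega
            rw [ha1, ha2, ha3]
            exact w234
          · -- VAR with anchor b
            have hb0 : 0 < a₂ := by omega
            have hb2a : a₂ < 2*a₁ := by omega
            obtain ⟨θ, hθ⟩ := var_lemma a₂ a₁ (2*a₁) hb0 (by omega)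
              (not_dvd_sandwich a₂ a₁ 0 (by omega) (by omega) (by omega))
              (not_dvd_sandwich a₂ (2*a₁) 0 (by omega) (by omega) (by omega))
              (not_dvd_sandwich a₂ (2*a₁) 0 (by omega) (by omega) (by omega))
              (not_dvd_sandwich a₂ (2*(2*a₁)) 2 (by omega) (by omega) (by omega))
              (not_dvd_sandwich a₂ (a₁+2*a₁) 1 (by omega) (by omega) (by omega))
              (by rw [show 2*a₁ - a₁ = a₁ by omega]
                  exact not_dvd_sandwich a₂ a₁ 0 (by omega) (by omega) (by omega))
            refine ⟨θ, ?_⟩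
            rw [hc3]
            push_cast at hθ ⊢
            linarith
      · -- generic : anchor c
        have hc0 : 0 < a₃ := by omega
        obtain ⟨θ, hθ⟩ := var_lemma a₃ a₁ a₂ hc0 h₁₂
          (not_dvd_sandwich a₃ a₁ 0 (by omega) (by omega) (by omega))
          (not_dvd_sandwich a₃ a₂ 0 (by omega) (by omega) (by omega))
          (not_dvd_sandwich a₃ (2*a₁) 0 (by omega) (by omega) (by omega))
          (not_dvd_sandwich a₃ (2*a₂) 0 (by omega) (by omega) (by omega))
          (not_dvd_sandwich a₃ (a₁+a₂) 0 (by omega) (by omega) (by omega))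
          (not_dvd_sandwich a₃ (a₂-a₁) 0 (by omega) (by omega) (by omega))
        exact ⟨θ, le_trans hθ hm32⟩
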